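/- Let Q be an irreducible n×n generator with stationary row vector π and let D⁻ = (1π − Q)⁻¹. Then for every t ≥ 0, ∫₀ᵗ exp(Qs) ds = 1π·t + (I − exp(Qt))·(D⁻ − 1π). -/

import Mathlib

open Matrix MeasureTheory

/-- A generator matrix is irreducible if every state can reach every other state
through transitions of positive rate. -/
def GeneratorIrreducible {n : ℕ} (Q : Matrix (Fin n) (Fin n) ℝ) : Prop :=
  ∀ i j : Fin n, Relation.ReflTransGen (fun a b => 0 < Q a b) i j

attribute [local instance] Matrix.linftyOpNormedRing Matrix.linftyOpNormedAlgebra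

/-- For an irreducible generator Q with stationary row vector π and
D⁻ = (1π − Q)⁻¹: for every t ≥ 0,
∫₀ᵗ exp(Qs) ds = 1π·t + (I − exp(Qt))·(D⁻ − 1π). -/
theorem integral_matrix_exp {n : ℕ} (hn : 1 ≤ n)
    (Q : Matrix (Fin n) (Fin n) ℝ)
    (hoff : ∀ i j, i ≠ j → 0 ≤ Q i j)
    (hrow : ∀ i, ∑ j, Q i j = 0)
    (hirr : GeneratorIrreducible Q)
    (π : Fin n → ℝ)
    (hπpos : ∀ i, 0 ≤ π i) (hπsum : ∑ i, π i = 1)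
    (hstat : Matrix.vecMul π Q = 0)
    (OnePi : Matrix (Fin n) (Fin n) ℝ) (hOnePi : OnePi = Matrix.of fun _ j => π j)
    (hunit : IsUnit (OnePi - Q)) :
    ∀ t : ℝ, 0 ≤ t →
      ∫ s in (0 : ℝ)..t, NormedSpace.exp (s • Q) =
        t • OnePi + (1 - NormedSpace.exp (t • Q)) * ((OnePi - Q)⁻¹ - OnePi) := by
  intro t ht
  set D : Matrix (Fin n) (Fin n) ℝ := (OnePi - Q)⁻¹ with hD
  set C : Matrix (Fin n) (Fin n) ℝ := D - OnePi with hCdef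
  -- basic algebraic identities
  have hQP : Q * OnePi = 0 := by
    ext i j
    simp only [hOnePi, Matrix.mul_apply, Matrix.of_apply, Matrix.zero_apply]
    rw [← Finset.sum_mul, hrow i, zero_mul]
  have hPQ : OnePi * Q = 0 := by
    ext i j
    have := congrFun hstat j
    simp only [Matrix.vecMul, dotProduct, Pi.zero_apply] at this
    simp only [hOnePi, Matrix.mul_apply, Matrix.of_apply, Matrix.zero_apply]
    exact this
  have hPP : OnePi * OnePi = OnePi := by
    ext i j
    simp only [hOnePi, Matrix.mul_apply, Matrix.of_apply]
    rw [← Finset.sum_mul, hπsum, one_mul]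
  have hdet : IsUnit (OnePi - Q).det := (Matrix.isUnit_iff_isUnit_det _).mp hunit
  have hinv : (OnePi - Q) * D = 1 := Matrix.mul_nonsing_inv _ hdet
  have hPD : OnePi * D = OnePi := by
    have h1 : OnePi * (OnePi - Q) = OnePi := by
      rw [Matrix.mul_sub, hPP, hPQ, sub_zero]
    calc OnePi * D = (OnePi * (OnePi - Q)) * D := by rw [h1]
      _ = OnePi * ((OnePi - Q) * D) := by rw [Matrix.mul_assoc]
      _ = OnePi := by rw [hinv, Matrix.mul_one]
  have hQC : Q * C = OnePi - 1 := by
    have hQD : Q * D = OnePi - 1 := by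
      have : (OnePi - (OnePi - Q)) * D = OnePi - 1 := by
        rw [Matrix.sub_mul, hPD, hinv]
      simpa using this
    rw [hCdef, Matrix.mul_sub, hQD, hQP, sub_zero]
  -- exp(sQ) * OnePi = OnePi
  have hexpP : ∀ s : ℝ, NormedSpace.exp (s • Q) * OnePi = OnePi := by
    intro s
    rw [NormedSpace.exp_eq_tsum (𝕂 := ℝ)]
    beta_reduce
    erw [← (NormedSpace.expSeries_summable' (𝕂 := ℝ) (s • Q)).tsum_mul_right OnePi]
    have hterm : ∀ k : ℕ, ((k.factorial : ℝ)⁻¹ • (s • Q) ^ k) * OnePi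
        = if k = 0 then OnePi else 0 := by
      intro k
      cases k with
      | zero => simp
      | succ m =>
        have : (s • Q) ^ (m + 1) * OnePi = 0 := by
          rw [pow_succ, Matrix.mul_assoc]
          have : (s • Q) * OnePi = 0 := by
            rw [Matrix.smul_mul, hQP, smul_zero]
          rw [this, Matrix.mul_zero]
        simp [Matrix.smul_mul, this]
    calc (∑' k : ℕ, ((k.factorial : ℝ)⁻¹ • (s • Q) ^ k) * OnePi)
        = ∑' k : ℕ, (if k = 0 then OnePi else 0) := by
          exact tsum_congr hterm
      _ = OnePi := by
          rw [tsum_eq_single 0 (fun b hb => by simp [hb])]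
          simp
  -- the antiderivative
  set F : ℝ → Matrix (Fin n) (Fin n) ℝ :=
    fun s => s • OnePi + (1 - NormedSpace.exp (s • Q)) * C with hF
  have hderiv : ∀ s : ℝ, HasDerivAt F (NormedSpace.exp (s • Q)) s := by
    intro s
    have h1 : HasDerivAt (fun u : ℝ => u • OnePi) ((1 : ℝ) • OnePi) s :=
      (hasDerivAt_id s).smul_const OnePi
    have h2 : HasDerivAt (fun u : ℝ => NormedSpace.exp (u • Q))
        (NormedSpace.exp (s • Q) * Q) s := hasDerivAt_exp_smul_const Q s
    have h3 : HasDerivAt (fun u : ℝ => (1 - NormedSpace.exp (u • Q)) * C)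
        ((-(NormedSpace.exp (s • Q) * Q)) * C) s :=
      ((h2.const_sub 1).mul_const C)
    have h4 := h1.add h3
    have key : (1 : ℝ) • OnePi + (-(NormedSpace.exp (s • Q) * Q)) * C
        = NormedSpace.exp (s • Q) := by
      rw [one_smul, Matrix.neg_mul, Matrix.mul_assoc, hQC, Matrix.mul_sub,
        hexpP s, Matrix.mul_one]
      abel
    rw [key] at h4
    exact h4
  have hcont : Continuous fun s : ℝ => NormedSpace.exp (s • Q) :=
    NormedSpace.exp_continuous.comp (continuous_id.smul continuous_const)
  have hint := intervalIntegral.integral_eq_sub_of_hasDerivAt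
    (f := F) (f' := fun s => NormedSpace.exp (s • Q))
    (fun x _ => hderiv x) (hcont.intervalIntegrable 0 t)
  rw [hint]
  have hF0 : F 0 = 0 := by
    simp [hF, NormedSpace.exp_zero]
  rw [hF0, sub_zero]
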